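/- For all m ≥ 1, P(K_m) := t_{m-1} + k_m − 1 satisfies P(K_m) = k_{m+3} − 1; that is, t_{m-1} + k_m = k_{m+3} for all m ≥ 1. -/
import Mathlib


/-- Tribonacci numbers, index-shifted so that `trib n` represents t_{n-2}:
`trib 0 = t₋₂ = 0`, `trib 1 = t₋₁ = 1`, `trib 2 = t₀ = 1`, and
`trib (n+3) = trib (n+2) + trib (n+1) + trib n`. -/
def trib : ℕ → ℕ
  | 0 => 0
  | 1 => 1
  | 2 => 1
  | n + 3 => trib (n + 2) + trib (n + 1) + trib n

/-- Kernel numbers: k₀ = 0, k₁ = k₂ = 1, k_m = k_{m-1} + k_{m-2} + k_{m-3} - 1 for m ≥ 3. -/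
def ker : ℕ → ℕ
  | 0 => 0
  | 1 => 1
  | 2 => 1
  | n + 3 => ker (n + 2) + ker (n + 1) + ker n - 1

lemma ker_pos (n : ℕ) : 1 ≤ ker (n + 1) := by
  induction n using Nat.strong_induction_on with
  | _ n ih =>
    match n with
    | 0 => simp [ker]
    | 1 => simp [ker]
    | n + 2 =>
      have h1 : 1 ≤ ker (n + 2) := ih (n + 1) (by omega)
      have h2 := ih n (by omega)
      show 1 ≤ ker (n + 2) + ker (n + 1) + ker n - 1
      omega

/-- For all m ≥ 1, t_{m-1} + k_m = k_{m+3}  (here `trib (m+1)` = t_{m-1}). -/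
theorem trib_add_ker (m : ℕ) (hm : 1 ≤ m) :
    trib (m + 1) + ker m = ker (m + 3) := by
  induction m using Nat.strong_induction_on with
  | _ m ih =>
    match m with
    | 1 => decide
    | 2 => decide
    | 3 => decide
    | m + 4 =>
      have h1 : trib (m + 4) + ker (m + 3) = ker (m + 6) := ih (m + 3) (by omega) (by omega)
      have h2 : trib (m + 3) + ker (m + 2) = ker (m + 5) := ih (m + 2) (by omega) (by omega)
      have h3 : trib (m + 2) + ker (m + 1) = ker (m + 4) := ih (m + 1) (by omega) (by omega)
      have p1 : 1 ≤ ker (m + 4) := ker_pos (m + 3)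
      have p2 : 1 ≤ ker (m + 3) := ker_pos (m + 2)
      have p5 : 1 ≤ ker (m + 6) := ker_pos (m + 5)
      have p6 : 1 ≤ ker (m + 5) := ker_pos (m + 4)
      show trib (m + 4) + trib (m + 3) + trib (m + 2) + ker (m + 4) = ker (m + 7)
      have e1 : ker (m + 7) = ker (m + 6) + ker (m + 5) + ker (m + 4) - 1 := rfl
      have e2 : ker (m + 4) = ker (m + 3) + ker (m + 2) + ker (m + 1) - 1 := rfl
      have p7 : 1 ≤ ker (m + 2) := ker_pos (m + 1)
      have p8 : 1 ≤ ker (m + 1) := ker_pos m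
      omega
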